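/- In the abstract population protocol model, let p be a predicate of the form Σ_{i∈[k]} aᵢNᵢ ≥ c on input multiplicities N₁,…,N_k, with integer coefficients aᵢ such that some aᵢ > 0 and some a_j < 0, and c ≥ 0. Then no protocol that stably computes p can have a reachable output-stable state. -/

import Mathlib

/-- One parallel step of a population protocol with transition function `δ`:
    the scheduler selects a nonempty matching (a multiset of ordered pairs of
    distinct individuals), and each selected pair interacts via `δ` while the
    remaining individuals are unchanged. -/
def PPStep {Q : Type*} [DecidableEq Q] (δ : Q → Q → Q × Q)
    (C C' : Multiset Q) : Prop :=
  ∃ M : Multiset (Q × Q), M ≠ 0 ∧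
    M.map Prod.fst + M.map Prod.snd ≤ C ∧
    C' = C - (M.map Prod.fst + M.map Prod.snd)
        + M.map (fun p => (δ p.1 p.2).1) + M.map (fun p => (δ p.1 p.2).2)

/-- Reachability: the reflexive-transitive closure of the one-step relation. -/
def PPReach {Q : Type*} [DecidableEq Q] (δ : Q → Q → Q × Q) :
    Multiset Q → Multiset Q → Prop :=
  Relation.ReflTransGen (PPStep δ)

/-- A fair infinite execution: every step is legal, and any configuration
    reachable in one step from a configuration occurring infinitely often
    itself occurs infinitely often. -/
def FairExec {Q : Type*} [DecidableEq Q] (δ : Q → Q → Q × Q)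
    (e : ℕ → Multiset Q) : Prop :=
  (∀ i, PPStep δ (e i) (e (i + 1))) ∧
  ∀ c c', PPStep δ c c' → (∀ i, ∃ j, i ≤ j ∧ e j = c) →
    (∀ i, ∃ j, i ≤ j ∧ e j = c')

/-- A state `q` is output-stable if whenever a configuration contains `q`,
    every reachable configuration contains some state with output `O q`. -/
def OutputStable {Q : Type*} [DecidableEq Q] (δ : Q → Q → Q × Q)
    (O : Q → Bool) (q : Q) : Prop :=
  ∀ C C', q ∈ C → PPReach δ C C' → ∃ q' ∈ C', O q' = O q


set_option linter.unusedSectionVars false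
set_option linter.deprecated false
set_option linter.unusedVariables false

section Aux





variable {Q : Type*} [DecidableEq Q] {δ : Q → Q → Q × Q}

lemma PPStep.add {C C' D : Multiset Q} (h : PPStep δ C C') :
    PPStep δ (C + D) (C' + D) := by
  obtain ⟨M, hM0, hle, hC'⟩ := h
  refine ⟨M, hM0, hle.trans (Multiset.le_add_right _ _), ?_⟩
  subst hC'
  have h1 : C + D - (M.map Prod.fst + M.map Prod.snd)
      = C - (M.map Prod.fst + M.map Prod.snd) + D := by
    rw [add_comm C D, add_tsub_assoc_of_le hle, add_comm]
  rw [h1]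
  generalize C - (M.map Prod.fst + M.map Prod.snd) = A
  generalize (M.map fun p => (δ p.1 p.2).1) = B1
  generalize (M.map fun p => (δ p.1 p.2).2) = B2
  abel

lemma PPReach.add {C C' D : Multiset Q} (h : PPReach δ C C') :
    PPReach δ (C + D) (C' + D) := by
  induction h with
  | refl => exact Relation.ReflTransGen.refl
  | tail _ hstep ih => exact ih.tail hstep.add

lemma PPStep.card_eq {C C' : Multiset Q} (h : PPStep δ C C') :
    C'.card = C.card := by
  obtain ⟨M, hM0, hle, hC'⟩ := h
  have hc := Multiset.card_le_card hle
  subst hC'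
  simp only [Multiset.card_add, Multiset.card_sub hle, Multiset.card_map,
    Multiset.card_add] at *
  omega

lemma PPReach.card_eq {C C' : Multiset Q} (h : PPReach δ C C') :
    C'.card = C.card := by
  induction h with
  | refl => rfl
  | tail _ hstep ih => rw [hstep.card_eq, ih]

lemma exists_step_of_two_le_card {C : Multiset Q} (h : 2 ≤ C.card) :
    ∃ C', PPStep δ C C' := by
  obtain ⟨x, hx⟩ := Multiset.card_pos_iff_exists_mem.mp (show 0 < C.card by omega)
  obtain ⟨C₁, rfl⟩ := Multiset.exists_cons_of_mem hx
  have h1 : 1 ≤ C₁.card := by simpa using h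
  obtain ⟨y, hy⟩ := Multiset.card_pos_iff_exists_mem.mp h1
  obtain ⟨C₂, rfl⟩ := Multiset.exists_cons_of_mem hy
  refine ⟨_, ({(x, y)} : Multiset (Q × Q)), by simp, ?_, rfl⟩
  show ({x} : Multiset Q) + {y} ≤ x ::ₘ y ::ₘ C₂
  have : ({x} : Multiset Q) + {y} = x ::ₘ y ::ₘ 0 := rfl
  rw [this]
  exact Multiset.cons_le_cons _ (Multiset.cons_le_cons _ (Multiset.zero_le _))

variable [Fintype Q]

lemma finite_fixedCard (n : ℕ) : {X : Multiset Q | X.card = n}.Finite := by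
  have : {X : Multiset Q | X.card = n} ⊆ Set.range (Sym.toMultiset : Sym Q n → Multiset Q) := by
    intro X hX
    exact ⟨⟨X, hX⟩, rfl⟩
  exact (Set.finite_range _).subset this

def reachSet (δ : Q → Q → Q × Q) (C : Multiset Q) : Set (Multiset Q) :=
  {X | PPReach δ C X}

lemma reachSet_finite (C : Multiset Q) : (reachSet δ C).Finite := by
  refine (finite_fixedCard C.card).subset ?_
  intro X hX
  exact hX.card_eq

lemma exists_bottom (C : Multiset Q) :
    ∃ D, PPReach δ C D ∧ ∀ X, PPReach δ D X → PPReach δ X D := by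
  obtain ⟨D, hD, hmin⟩ := Set.exists_min_image _
    (fun X => (reachSet δ X).ncard) (reachSet_finite (δ := δ) C) ⟨C, Relation.ReflTransGen.refl⟩
  refine ⟨D, hD, fun X hX => ?_⟩
  have hsub : reachSet δ X ⊆ reachSet δ D := fun Y hY => hX.trans hY
  have hle : (reachSet δ X).ncard ≤ (reachSet δ D).ncard :=
    Set.ncard_le_ncard hsub (reachSet_finite D)
  have heq := le_antisymm (hmin X (hD.trans hX)) hle
  have : reachSet δ X = reachSet δ D :=
    Set.eq_of_subset_of_ncard_le hsub heq.le (reachSet_finite D)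
  have : D ∈ reachSet δ X := this ▸ (Relation.ReflTransGen.refl : PPReach δ D D)
  exact this
section
variable {α : Type*} {r : α → α → Prop}

def IsPath (r : α → α → Prop) (x : α) (l : List α) (y : α) : Prop :=
  List.Chain r x l ∧ (x :: l).getLast (by simp) = y

lemma isPath_nil (x : α) : IsPath r x [] x := ⟨List.Chain.nil, rfl⟩

lemma IsPath.trans : ∀ {x : α} {l₁ l₂ : List α} {y z : α},
    IsPath r x l₁ y → IsPath r y l₂ z → IsPath r x (l₁ ++ l₂) z := by
  intro x l₁
  induction l₁ generalizing x with
  | nil =>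
    intro l₂ y z h1 h2
    have : x = y := h1.2
    subst this
    exact h2
  | cons b l ih =>
    intro l₂ y z h1 h2
    obtain ⟨hch, hlast⟩ := h1
    replace hch := List.chain_cons.mp hch
    have hlast' : (b :: l).getLast (by simp) = y := by
      rw [List.getLast_cons (by simp : (b :: l) ≠ [])] at hlast
      exact hlast
    have := ih ⟨hch.2, hlast'⟩ h2
    refine ⟨List.chain_cons.mpr ⟨hch.1, this.1⟩, ?_⟩
    simp only [List.cons_append]
    rw [List.getLast_cons (by simp : (b :: (l ++ l₂)) ≠ [])]
    exact this.2

lemma reach_isPath {x y : α} (h : Relation.ReflTransGen r x y) :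
    ∃ l, IsPath r x l y := by
  obtain ⟨l, hc, hl⟩ := List.exists_isChain_cons_of_relationReflTransGen h
  exact ⟨l, hc, hl⟩

lemma chain_mem_closed {T : Set α} (hT : ∀ a ∈ T, ∀ b, r a b → b ∈ T) :
    ∀ {x : α} {l : List α}, x ∈ T → List.Chain r x l → ∀ y ∈ l, y ∈ T := by
  intro x l
  induction l generalizing x with
  | nil => intro _ _ y hy; simp at hy
  | cons b l ih =>
    intro hx hch y hy
    replace hch := List.chain_cons.mp hch
    have hb : b ∈ T := hT x hx b hch.1
    rcases List.mem_cons.mp hy with rfl | hy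
    · exact hb
    · exact ih hb hch.2 y hy

/-- Tour: a path from D back to D covering all elements of a list of
    mutually reachable elements. -/
lemma exists_tour {T : Set α} {D : α}
    (hconn : ∀ X ∈ T, ∀ Y ∈ T, Relation.ReflTransGen r X Y) (hD : D ∈ T) :
    ∀ L : List α, (∀ x ∈ L, x ∈ T) →
      ∃ l, IsPath r D l D ∧ ∀ x ∈ L, x ∈ (D :: l) := by
  intro L
  induction L with
  | nil => exact fun _ => ⟨[], isPath_nil D, by simp⟩
  | cons b L ih =>
    intro hL
    obtain ⟨l, hl, hmem⟩ := ih (fun x hx => hL x (List.mem_cons_of_mem _ hx))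
    have hb : b ∈ T := hL b (List.mem_cons_self)
    obtain ⟨p₁, hp₁⟩ := reach_isPath (hconn D hD b hb)
    obtain ⟨p₂, hp₂⟩ := reach_isPath (hconn b hb D hD)
    refine ⟨p₁ ++ (p₂ ++ l), (hp₁.trans (hp₂.trans hl)), ?_⟩
    intro x hx
    rcases List.mem_cons.mp hx with heq | hx
    · -- x = b : b is last of D :: p₁
      rw [heq]
      have : b ∈ D :: p₁ := hp₁.2 ▸ List.getLast_mem _
      rcases List.mem_cons.mp this with rfl | h
      · exact List.mem_cons_self
      · exact List.mem_cons_of_mem _ (List.mem_append.mpr (Or.inl h))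
    · rcases List.mem_cons.mp (hmem x hx) with rfl | h
      · exact List.mem_cons_self
      · exact List.mem_cons_of_mem _
          (List.mem_append.mpr (Or.inr (List.mem_append.mpr (Or.inr h))))
end

section exec
variable {α : Type*} {r : α → α → Prop}

lemma chain'_get {l : List α} (h : List.Chain' r l) (i : ℕ)
    (hi : i + 1 < l.length) :
    r (l.get ⟨i, by omega⟩) (l.get ⟨i + 1, hi⟩) := by
  replace h := List.isChain_iff_getElem.mp h
  exact h i (by omega)

lemma get_cons_succ' (a : α) (l : List α) (i : ℕ) (h : i + 1 < (a :: l).length) :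
    (a :: l).get ⟨i + 1, h⟩ = l.get ⟨i, by simpa using h⟩ := rfl

lemma exec_reach {Q : Type*} [DecidableEq Q] {δ : Q → Q → Q × Q}
    {e : ℕ → Multiset Q} (hstep : ∀ i, PPStep δ (e i) (e (i + 1))) :
    ∀ t t', t ≤ t' → PPReach δ (e t) (e t') := by
  intro t t' h
  induction t', h using Nat.le_induction with
  | base => exact Relation.ReflTransGen.refl
  | succ n hn ih => exact ih.tail (hstep n)

end exec

noncomputable def mkExec {α : Type*} (full cyc : List α) (d : α) : ℕ → α :=
  fun n =>
    if h : n < full.length then full.get ⟨n, h⟩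
    else if hm : cyc.length = 0 then d
    else cyc.get ⟨(n - full.length) % cyc.length, Nat.mod_lt _ (by omega)⟩

lemma exists_fair_exec {Q : Type*} [DecidableEq Q] [Fintype Q] (δ : Q → Q → Q × Q)
    (C0 D : Multiset Q) (h2 : 2 ≤ D.card)
    (hCD : PPReach δ C0 D) (hbot : ∀ X, PPReach δ D X → PPReach δ X D) :
    ∃ e : ℕ → Multiset Q, e 0 = C0 ∧ FairExec δ e ∧
      ∀ t, ∃ t', t ≤ t' ∧ PPReach δ (e t) (e t') ∧ PPReach δ D (e t') := by
  classical
  set T : Set (Multiset Q) := reachSet δ D with hT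
  have hDT : D ∈ T := Relation.ReflTransGen.refl
  have hclosed : ∀ a ∈ T, ∀ b, PPStep δ a b → b ∈ T := fun a ha b hb => ha.tail hb
  have hconn : ∀ X ∈ T, ∀ Y ∈ T, PPReach δ X Y := fun X hX Y hY => (hbot X hX).trans hY
  set L : List (Multiset Q) := (reachSet_finite (δ := δ) D).toFinset.toList with hL
  have hLT : ∀ x ∈ L, x ∈ T := by
    intro x hx
    rw [hL, Finset.mem_toList, Set.Finite.mem_toFinset] at hx
    exact hx
  have hTL : ∀ x ∈ T, x ∈ L := by
    intro x hx
    rw [hL, Finset.mem_toList, Set.Finite.mem_toFinset]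
    exact hx
  obtain ⟨ltour, hltour, hcover⟩ := exists_tour hconn hDT L hLT
  obtain ⟨D₁, hD₁⟩ := exists_step_of_two_le_card (δ := δ) h2
  have hD₁T : D₁ ∈ T := hclosed D hDT D₁ hD₁
  obtain ⟨p₂, hp₂⟩ := reach_isPath (hbot D₁ hD₁T)
  have hl0 : IsPath (PPStep δ) D (D₁ :: p₂) D := by
    refine ⟨List.chain_cons.mpr ⟨hD₁, hp₂.1⟩, ?_⟩
    rw [List.getLast_cons (by simp : (D₁ :: p₂) ≠ [])]
    exact hp₂.2
  set cyc : List (Multiset Q) := (D₁ :: p₂) ++ ltour with hcycdef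
  have hcyc : IsPath (PPStep δ) D cyc D := hl0.trans hltour
  have hcycne : cyc ≠ [] := by simp [hcycdef]
  set m : ℕ := cyc.length with hm
  have hm0 : 0 < m := List.length_pos_iff.mpr hcycne
  have hDcyc : D ∈ cyc := by
    have h1 : (D :: cyc).getLast (by simp) = cyc.getLast hcycne :=
      List.getLast_cons hcycne
    have h2' := hcyc.2
    rw [h1] at h2'
    exact h2' ▸ List.getLast_mem hcycne
  have hTcyc : ∀ x ∈ T, x ∈ cyc := by
    intro x hx
    rcases List.mem_cons.mp (hcover x (hTL x hx)) with heq | h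
    · exact heq ▸ hDcyc
    · exact List.mem_append.mpr (Or.inr h)
  have hcycT : ∀ x ∈ cyc, x ∈ T :=
    chain_mem_closed hclosed hDT hcyc.1
  obtain ⟨pre, hpre⟩ := reach_isPath hCD
  set full : List (Multiset Q) := C0 :: pre with hfull
  set L0 : ℕ := full.length with hL0
  have hL0pos : 0 < L0 := by simp [hL0, hfull]
  set e : ℕ → Multiset Q := mkExec full cyc D with he
  have he_lt : ∀ n (h : n < L0), e n = full.get ⟨n, h⟩ := by
    intro n h
    show mkExec full cyc D n = _
    exact dif_pos (show n < full.length from h)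
  have he_ge : ∀ n, L0 ≤ n → e n = cyc.get ⟨(n - L0) % m, Nat.mod_lt _ hm0⟩ := by
    intro n h
    have h1 : ¬ n < full.length := Nat.not_lt.mpr h
    have h2 : ¬ cyc.length = 0 := hm0.ne'
    show mkExec full cyc D n = _
    exact (dif_neg h1).trans (dif_neg h2)
  have hfullc : full.Chain' (PPStep δ) := hpre.1
  have hcycc : (D :: cyc).Chain' (PPStep δ) := hcyc.1
  have hfull_last : full.get ⟨L0 - 1, by omega⟩ = D := by
    have h3 := hpre.2
    rw [List.getLast_eq_getElem] at h3
    exact h3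
  have hcyc_last : cyc.get ⟨m - 1, by omega⟩ = D := by
    have h1 : (D :: cyc).getLast (by simp) = cyc.getLast hcycne :=
      List.getLast_cons hcycne
    have h2' := hcyc.2
    rw [h1, List.getLast_eq_getElem] at h2'
    exact h2'
  have hstepD0 : PPStep δ D (cyc.get ⟨0, hm0⟩) := by
    have h3 := chain'_get hcycc 0 (by simp; omega)
    rw [get_cons_succ'] at h3
    exact h3
  have hcycstep : ∀ (i : ℕ) (h : i + 1 < m),
      PPStep δ (cyc.get ⟨i, by omega⟩) (cyc.get ⟨i + 1, h⟩) := by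
    intro i h
    have h3 := chain'_get hcycc (i + 1) (by simp; omega)
    rw [get_cons_succ', get_cons_succ'] at h3
    exact h3
  have hstep : ∀ n, PPStep δ (e n) (e (n + 1)) := by
    intro n
    rcases lt_trichotomy (n + 1) L0 with h1 | h1 | h1
    · rw [he_lt n (by omega), he_lt (n + 1) h1]
      exact chain'_get hfullc n h1
    · rw [he_lt n (by omega), he_ge (n + 1) (by omega)]
      have hidx : (n + 1 - L0) % m = 0 := by
        have h4 : n + 1 - L0 = 0 := by omega
        simp [h4]
      have h1' : full.get ⟨n, by omega⟩ = D := by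
        rw [show (⟨n, by omega⟩ : Fin full.length) = ⟨L0 - 1, by omega⟩ from
          Fin.ext (by simp; omega)]
        exact hfull_last
      rw [h1']
      rw [show (⟨(n + 1 - L0) % m, Nat.mod_lt _ hm0⟩ : Fin m) = ⟨0, hm0⟩ from
        Fin.ext (by simpa using hidx)]
      exact hstepD0
    · have hnL : L0 ≤ n := by omega
      rw [he_ge n hnL, he_ge (n + 1) (by omega)]
      set q : ℕ := (n - L0) % m with hq
      have hqm : q < m := Nat.mod_lt _ hm0
      have hnext : (n + 1 - L0) % m = (q + 1) % m := by
        have h3 : n + 1 - L0 = (n - L0) + 1 := by omega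
        rw [h3, hq, Nat.mod_add_mod]
      rcases Nat.lt_or_ge (q + 1) m with hlt | hge
      · rw [show (⟨(n + 1 - L0) % m, Nat.mod_lt _ hm0⟩ : Fin m) = ⟨q + 1, hlt⟩ from
          Fin.ext (by simp [hnext, Nat.mod_eq_of_lt hlt])]
        exact hcycstep q hlt
      · have hqm1 : q + 1 = m := by omega
        have hidx : (n + 1 - L0) % m = 0 := by
          rw [hnext, hqm1, Nat.mod_self]
        rw [show (⟨(n - L0) % m, Nat.mod_lt _ hm0⟩ : Fin m) = ⟨m - 1, by omega⟩ from
          Fin.ext (by simp; omega)]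
        rw [show (⟨(n + 1 - L0) % m, Nat.mod_lt _ hm0⟩ : Fin m) = ⟨0, hm0⟩ from
          Fin.ext (by simpa using hidx)]
        rw [hcyc_last]
        exact hstepD0
  have hio : ∀ x ∈ cyc, ∀ i, ∃ j, i ≤ j ∧ e j = x := by
    intro x hx i
    obtain ⟨p, hpx⟩ := List.mem_iff_get.mp hx
    have him : i ≤ m * i := Nat.le_mul_of_pos_left i hm0
    refine ⟨L0 + p.val + m * i, by omega, ?_⟩
    rw [he_ge _ (by omega)]
    have hidx : (L0 + p.val + m * i - L0) % m = p.val := by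
      have h1 : L0 + p.val + m * i - L0 = p.val + m * i := by omega
      rw [h1, Nat.add_mul_mod_self_left, Nat.mod_eq_of_lt p.isLt]
    rw [show (⟨(L0 + p.val + m * i - L0) % m, Nat.mod_lt _ hm0⟩ : Fin m) = p from
      Fin.ext (by simpa using hidx)]
    exact hpx
  have hfair : FairExec δ e := by
    refine ⟨hstep, ?_⟩
    intro c c' hcc' hioc i
    obtain ⟨j, hj, hej⟩ := hioc L0
    have hcin : c ∈ cyc := by
      rw [he_ge j hj] at hej
      exact hej ▸ List.get_mem _ _
    have hcT : c ∈ T := hcycT c hcin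
    have hc'T : c' ∈ T := hclosed c hcT c' hcc'
    exact hio c' (hTcyc c' hc'T) i
  refine ⟨e, ?_, hfair, ?_⟩
  · rw [he_lt 0 hL0pos]
    rfl
  · intro t
    refine ⟨max t L0, le_max_left _ _, exec_reach hstep _ _ (le_max_left _ _), ?_⟩
    have hge : L0 ≤ max t L0 := le_max_right _ _
    rw [he_ge _ hge]
    exact hcycT _ (List.get_mem _ _)

lemma sum_count_add_replicate {k : ℕ} (a : Fin k → ℤ) (w : Multiset (Fin k))
    (n : ℕ) (j : Fin k) :
    ∑ i, a i * (((w + Multiset.replicate n j).count i : ℕ) : ℤ)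
      = (∑ i, a i * (w.count i : ℤ)) + (n : ℤ) * a j := by
  have h1 : ∀ i : Fin k, (w + Multiset.replicate n j).count i
      = w.count i + if j = i then n else 0 := by
    intro i
    rw [Multiset.count_add, Multiset.count_replicate]
  simp only [h1]
  push_cast
  simp only [mul_add]
  rw [Finset.sum_add_distrib]
  congr 1
  simp only [mul_ite, mul_zero]
  rw [Finset.sum_ite_eq]
  simp [mul_comm]

lemma contra_aux {Q : Type*} [DecidableEq Q] [Fintype Q] {k : ℕ}
    (δ : Q → Q → Q × Q) (O : Q → Bool) (I : Fin k → Q) (a : Fin k → ℤ) (c : ℤ)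
    (hcomputes : ∀ w : Multiset (Fin k), w ≠ 0 →
      ∀ e : ℕ → Multiset Q, e 0 = w.map I → FairExec δ e →
        ∃ t, ∀ C', PPReach δ (e t) C' → ∀ q ∈ C',
          O q = decide (c ≤ ∑ i, a i * (w.count i : ℤ)))
    (q : Q) (hstab : OutputStable δ O q)
    (w' : Multiset (Fin k)) (hw' : w' ≠ 0)
    (CE : Multiset Q) (hqCE : q ∈ CE)
    (hreach' : PPReach δ (w'.map I) CE)
    (hcard : 2 ≤ (w'.map I).card)
    (hval : decide (c ≤ ∑ i, a i * (w'.count i : ℤ)) = !(O q)) : False := by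
  obtain ⟨D, hD1, hD2⟩ := exists_bottom (δ := δ) CE
  have hcardD : 2 ≤ D.card := by
    rw [hD1.card_eq, hreach'.card_eq]
    exact hcard
  have hC0D : PPReach δ (w'.map I) D := hreach'.trans hD1
  obtain ⟨e, he0, hfair, hlast⟩ := exists_fair_exec δ (w'.map I) D hcardD hC0D hD2
  obtain ⟨t, ht⟩ := hcomputes w' hw' e he0 hfair
  obtain ⟨t', htt', hre, hrD⟩ := hlast t
  have hall := ht (e t') hre
  have hCEet' : PPReach δ CE (e t') := hD1.trans hrD
  obtain ⟨q', hq'mem, hq'⟩ := hstab CE (e t') hqCE hCEet'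
  have hcontra : O q = !(O q) := hq'.symm.trans ((hall q' hq'mem).trans hval)
  simp at hcontra


end Aux

/-- No protocol stably computing a mixed-sign threshold predicate
    `Σᵢ aᵢNᵢ ≥ c` (some `aᵢ > 0`, some `a_j < 0`, `c ≥ 0`) can have a
    reachable output-stable state. Inputs are indexed by `Fin k`, the input
    function is `I`, and input assignments are nonempty multisets `w` over
    `Fin k` with multiplicities `Nᵢ = w.count i`. -/
theorem mixed_signs_no_output_stable {Q : Type*} [DecidableEq Q] [Fintype Q]
    (k : ℕ) (a : Fin k → ℤ) (c : ℤ) (hc : 0 ≤ c)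
    (hpos : ∃ i, 0 < a i) (hneg : ∃ j, a j < 0)
    (δ : Q → Q → Q × Q) (O : Q → Bool) (I : Fin k → Q)
    (hcomputes : ∀ w : Multiset (Fin k), w ≠ 0 →
      ∀ e : ℕ → Multiset Q, e 0 = w.map I → FairExec δ e →
        ∃ t, ∀ C', PPReach δ (e t) C' → ∀ q ∈ C',
          O q = decide (c ≤ ∑ i, a i * (w.count i : ℤ))) :
    ¬ ∃ q : Q, (∃ (w : Multiset (Fin k)) (C : Multiset Q),
        w ≠ 0 ∧ PPReach δ (w.map I) C ∧ q ∈ C) ∧ OutputStable δ O q := by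
  rintro ⟨q, ⟨w, C, hw0, hreach, hqC⟩, hstab⟩
  obtain ⟨i0, hi0⟩ := hpos
  obtain ⟨j0, hj0⟩ := hneg
  set S : ℤ := ∑ i, a i * (w.count i : ℤ) with hS
  have hwcard : 0 < w.card := Multiset.card_pos.mpr hw0
  -- choose the extra input index and count depending on O q
  rcases hOq : O q with _ | _
  -- case O q = false : make the predicate true by adding positives
  · set n : ℕ := (c - S).toNat + 1 with hn
    set w' : Multiset (Fin k) := w + Multiset.replicate n i0 with hw'
    have hw'card : w'.card = w.card + n := by simp [hw']
    have hw'0 : w' ≠ 0 := Multiset.card_pos.mp (by omega)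
    have hsum : ∑ i, a i * (w'.count i : ℤ) = S + (n : ℤ) * a i0 :=
      sum_count_add_replicate a w n i0
    have hnval : c - S < (n : ℤ) := by
      have := Int.self_le_toNat (c - S)
      push_cast [hn]
      omega
    have hpred : c ≤ ∑ i, a i * (w'.count i : ℤ) := by
      rw [hsum]
      have h1 : (n : ℤ) * 1 ≤ (n : ℤ) * a i0 :=
        mul_le_mul_of_nonneg_left (by omega) (by positivity)
      omega
    refine contra_aux δ O I a c hcomputes q hstab w' hw'0
      (C + (Multiset.replicate n i0).map I) (Multiset.mem_add.mpr (Or.inl hqC)) ?_ ?_ ?_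
    · rw [hw', Multiset.map_add]
      exact hreach.add
    · rw [Multiset.card_map]
      omega
    · rw [hOq, decide_eq_true hpred]
      rfl
  -- case O q = true : make the predicate false by adding negatives
  · set n : ℕ := (S - c).toNat + 1 with hn
    set w' : Multiset (Fin k) := w + Multiset.replicate n j0 with hw'
    have hw'card : w'.card = w.card + n := by simp [hw']
    have hw'0 : w' ≠ 0 := Multiset.card_pos.mp (by omega)
    have hsum : ∑ i, a i * (w'.count i : ℤ) = S + (n : ℤ) * a j0 :=
      sum_count_add_replicate a w n j0
    have hnval : S - c < (n : ℤ) := by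
      have := Int.self_le_toNat (S - c)
      push_cast [hn]
      omega
    have hpred : ¬ (c ≤ ∑ i, a i * (w'.count i : ℤ)) := by
      rw [hsum]
      have h1 : (n : ℤ) * a j0 ≤ (n : ℤ) * (-1) :=
        mul_le_mul_of_nonneg_left (by omega) (by positivity)
      omega
    refine contra_aux δ O I a c hcomputes q hstab w' hw'0
      (C + (Multiset.replicate n j0).map I) (Multiset.mem_add.mpr (Or.inl hqC)) ?_ ?_ ?_
    · rw [hw', Multiset.map_add]
      exact hreach.add
    · rw [Multiset.card_map]
      omega
    · rw [hOq, decide_eq_false hpred]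
      rfl
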